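/- Suppose R : X → PMF(Y) is a deletion (ε, δ)-DP local randomizer with reference distribution ρ, t-samplable via R_∅ : {0,1}^t → Y, and G : {0,1}^ℓ → {0,1}^t β-fools the density tests of R for some β ≥ 0. Define the truncated density ratio π̃_x(y) := min(R(x)(y), e^ε·ρ(y))/ρ(y) on the range of R_∅. Then for every x ∈ X: (i) 1 − δ − e^ε·β ≤ E_{s ~ Uniform({0,1}^ℓ)}[π̃_x(R_∅(G(s)))] ≤ 1 + e^ε·β, and (ii) E_{s ~ Uniform({0,1}^ℓ)}[max(1 − e^ε·π̃_x(R_∅(G(s))), 0)] ≤ δ + β. -/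

import Mathlib

open Finset MeasureTheory

private lemma step_antitone (c : ℝ) : Antitone (fun θ : ℝ => if θ ≤ c then (1:ℝ) else 0) := by
  intro a b hab
  by_cases hb : b ≤ c
  · simp [hb, le_trans hab hb]
  · simp only [hb, if_false]
    split <;> norm_num

private lemma integral_step (c M : ℝ) (h0 : 0 ≤ c) (hM : c ≤ M) :
    ∫ θ in (0:ℝ)..M, (if θ ≤ c then (1:ℝ) else 0) = c := by
  have hi1 : IntervalIntegrable (fun θ : ℝ => if θ ≤ c then (1:ℝ) else 0) volume 0 c :=
    (step_antitone c).intervalIntegrable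
  have hi2 : IntervalIntegrable (fun θ : ℝ => if θ ≤ c then (1:ℝ) else 0) volume c M :=
    (step_antitone c).intervalIntegrable
  rw [← intervalIntegral.integral_add_adjacent_intervals hi1 hi2]
  have e1 : ∫ θ in (0:ℝ)..c, (if θ ≤ c then (1:ℝ) else 0) = c := by
    rw [intervalIntegral.integral_congr (g := fun _ => (1:ℝ))]
    · simp
    · intro θ hθ
      rw [Set.uIcc_of_le h0] at hθ
      simp [hθ.2]
  have e2 : ∫ θ in c..M, (if θ ≤ c then (1:ℝ) else 0) = 0 := by
    rw [intervalIntegral.integral_congr_ae (g := fun _ => (0:ℝ))]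
    · simp
    · filter_upwards with θ hθ
      rw [Set.uIoc_of_le hM] at hθ
      simp [not_le.mpr hθ.1]
  rw [e1, e2]; ring


private lemma card_filter_antitone {ι : Type*} [Fintype ι] (W : ι → ℝ) (D : ℝ) (hD : 0 ≤ D) :
    Antitone (fun θ : ℝ => ((univ.filter fun s => θ ≤ W s).card : ℝ) / D) := by
  intro a b hab
  have hsub : (univ.filter fun s => b ≤ W s) ⊆ (univ.filter fun s => a ≤ W s) :=
    Finset.monotone_filter_right _ (fun s _ hs => le_trans hab hs)
  have h : ((univ.filter fun s => b ≤ W s).card : ℝ) ≤ (univ.filter fun s => a ≤ W s).card := by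
    exact_mod_cast Finset.card_le_card hsub
  rcases hD.eq_or_lt with h0 | h0
  · simp [← h0]
  · simp only []
    gcongr

private lemma sum_eq_integral {ι : Type*} [Fintype ι] (W : ι → ℝ) (M D : ℝ)
    (h0 : ∀ s, 0 ≤ W s) (hM : ∀ s, W s ≤ M) :
    (∑ s, W s) / D = ∫ θ in (0:ℝ)..M, ((univ.filter fun s => θ ≤ W s).card : ℝ) / D := by
  have key : ∀ θ : ℝ, ((univ.filter fun s => θ ≤ W s).card : ℝ) / D
      = ∑ s, (if θ ≤ W s then (1:ℝ) else 0) / D := by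
    intro θ
    rw [← Finset.sum_div, Finset.sum_boole]
  rw [intervalIntegral.integral_congr (g := fun θ => ∑ s, (if θ ≤ W s then (1:ℝ) else 0) / D)
    (fun θ _ => key θ)]
  rw [intervalIntegral.integral_finset_sum
    (fun s _ => ((step_antitone (W s)).intervalIntegrable.div_const D))]
  rw [Finset.sum_div]
  refine Finset.sum_congr rfl fun s _ => ?_
  rw [intervalIntegral.integral_div, integral_step _ _ (h0 s) (hM s)]

private lemma expect_compare {ι κ : Type*} [Fintype ι] [Fintype κ]
    (W₁ : ι → ℝ) (W₂ : κ → ℝ) (M β D₁ D₂ : ℝ) (hD₁ : 0 ≤ D₁) (hD₂ : 0 ≤ D₂) (hM : 0 ≤ M)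
    (h01 : ∀ s, 0 ≤ W₁ s) (hM1 : ∀ s, W₁ s ≤ M)
    (h02 : ∀ s, 0 ≤ W₂ s) (hM2 : ∀ s, W₂ s ≤ M)
    (hβ : ∀ θ ∈ Set.Ioc (0:ℝ) M,
      |((univ.filter fun s => θ ≤ W₁ s).card : ℝ) / D₁ -
       ((univ.filter fun s => θ ≤ W₂ s).card : ℝ) / D₂| ≤ β) :
    |(∑ s, W₁ s) / D₁ - (∑ s, W₂ s) / D₂| ≤ M * β := by
  rw [sum_eq_integral W₁ M D₁ h01 hM1, sum_eq_integral W₂ M D₂ h02 hM2,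
    ← intervalIntegral.integral_sub ((card_filter_antitone W₁ D₁ hD₁).intervalIntegrable)
      ((card_filter_antitone W₂ D₂ hD₂).intervalIntegrable)]
  calc |∫ θ in (0:ℝ)..M, (((univ.filter fun s => θ ≤ W₁ s).card : ℝ) / D₁ -
       ((univ.filter fun s => θ ≤ W₂ s).card : ℝ) / D₂)|
      ≤ β * |M - 0| := by
        rw [← Real.norm_eq_abs]
        apply intervalIntegral.norm_integral_le_of_norm_le_const
        intro θ hθ
        rw [Set.uIoc_of_le hM] at hθ
        exact hβ θ hθ
    _ = M * β := by rw [abs_of_nonneg (by linarith)]; ring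

private lemma strict_compare {ι κ : Type*} [Fintype ι] [Fintype κ]
    (W₁ : ι → ℝ) (W₂ : κ → ℝ) (M β D₁ D₂ c : ℝ) (hβ0 : 0 ≤ β)
    (hM1 : ∀ s, W₁ s ≤ M) (hM2 : ∀ s, W₂ s ≤ M) (hc : 0 ≤ c)
    (hβ : ∀ θ ∈ Set.Icc (0:ℝ) M,
      |((univ.filter fun s => θ ≤ W₁ s).card : ℝ) / D₁ -
       ((univ.filter fun s => θ ≤ W₂ s).card : ℝ) / D₂| ≤ β) :
    |((univ.filter fun s => c < W₁ s).card : ℝ) / D₁ -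
     ((univ.filter fun s => c < W₂ s).card : ℝ) / D₂| ≤ β := by
  classical
  set V : Finset ℝ := (univ.image W₁ ∪ univ.image W₂).filter (fun v => c < v) with hV
  by_cases hne : V.Nonempty
  · set θ := V.min' hne with hθ
    have hθV : θ ∈ V := V.min'_mem hne
    have hθc : c < θ := (Finset.mem_filter.mp hθV).2
    have hθM : θ ≤ M := by
      have := (Finset.mem_filter.mp hθV).1
      rcases Finset.mem_union.mp this with h | h
      · obtain ⟨s, _, he⟩ := Finset.mem_image.mp h; exact he ▸ hM1 s
      · obtain ⟨s, _, he⟩ := Finset.mem_image.mp h; exact he ▸ hM2 s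
    have e1 : (univ.filter fun s => c < W₁ s) = (univ.filter fun s => θ ≤ W₁ s) := by
      apply Finset.filter_congr
      intro s _
      constructor
      · intro h
        exact V.min'_le _ (Finset.mem_filter.mpr ⟨Finset.mem_union_left _
          (Finset.mem_image_of_mem _ (Finset.mem_univ s)), h⟩)
      · intro h; exact lt_of_lt_of_le hθc h
    have e2 : (univ.filter fun s => c < W₂ s) = (univ.filter fun s => θ ≤ W₂ s) := by
      apply Finset.filter_congr
      intro s _
      constructor
      · intro h
        exact V.min'_le _ (Finset.mem_filter.mpr ⟨Finset.mem_union_right _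
          (Finset.mem_image_of_mem _ (Finset.mem_univ s)), h⟩)
      · intro h; exact lt_of_lt_of_le hθc h
    rw [e1, e2]
    exact hβ θ ⟨le_of_lt (lt_of_le_of_lt hc hθc), hθM⟩
  · have e1 : (univ.filter fun s => c < W₁ s) = ∅ := by
      apply Finset.filter_eq_empty_iff.mpr
      intro s _ h
      exact hne ⟨W₁ s, Finset.mem_filter.mpr ⟨Finset.mem_union_left _
        (Finset.mem_image_of_mem _ (Finset.mem_univ s)), h⟩⟩
    have e2 : (univ.filter fun s => c < W₂ s) = ∅ := by
      apply Finset.filter_eq_empty_iff.mpr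
      intro s _ h
      exact hne ⟨W₂ s, Finset.mem_filter.mpr ⟨Finset.mem_union_right _
        (Finset.mem_image_of_mem _ (Finset.mem_univ s)), h⟩⟩
    rw [e1, e2]
    simpa using hβ0

private lemma avg_fiber {Y : Type*} [Fintype Y] [DecidableEq Y] {t : ℕ}
    (R₀ : (Fin t → Bool) → Y) (φ : Y → ℝ) :
    (∑ r : Fin t → Bool, φ (R₀ r)) / 2 ^ t =
    ∑ y, (((univ.filter fun r : Fin t → Bool => R₀ r = y).card : ℝ) / 2 ^ t) * φ y := by
  rw [← Finset.sum_fiberwise univ R₀ (fun r => φ (R₀ r)), Finset.sum_div]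
  refine Finset.sum_congr rfl fun y _ => ?_
  rw [div_mul_eq_mul_div]
  congr 1
  rw [Finset.sum_congr rfl (fun r hr => by rw [(Finset.mem_filter.mp hr).2]),
    Finset.sum_const, nsmul_eq_mul, mul_comm]




/-- **Pseudorandom seeds approximately preserve the truncated density ratio of an
(ε,δ)-DP randomizer.** With `π̃_x(y) = min(R(x)(y), e^ε ρ(y))/ρ(y)`:
(i) `1 − δ − e^ε β ≤ E_{s}[π̃_x(R₀(G s))] ≤ 1 + e^ε β`, and
(ii) `E_{s}[max(1 − e^ε π̃_x(R₀(G s)), 0)] ≤ δ + β`. -/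
theorem stmt_6 {X Y : Type*} [Fintype X] [Fintype Y] [Nonempty X] [Nonempty Y] [DecidableEq Y]
    (R : X → Y → ℝ) (ρ : Y → ℝ) (ε δ β : ℝ) (t ℓ : ℕ)
    (R₀ : (Fin t → Bool) → Y) (G : (Fin ℓ → Bool) → Fin t → Bool)
    (hRpmf : ∀ x, (∀ y, 0 ≤ R x y) ∧ ∑ y, R x y = 1)
    (hρpmf : (∀ y, 0 ≤ ρ y) ∧ ∑ y, ρ y = 1)
    (hε : 0 ≤ ε) (hδ : 0 ≤ δ) (hβ0 : 0 ≤ β)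
    (hDP : ∀ x, (∑ y, max (R x y - Real.exp ε * ρ y) 0 ≤ δ) ∧
      (∑ y, max (ρ y - Real.exp ε * R x y) 0 ≤ δ))
    (hsamp : ∀ y, ((univ.filter fun r : Fin t → Bool => R₀ r = y).card : ℝ) / 2 ^ t = ρ y)
    (hfool : ∀ x : X, ∀ θ ∈ Set.Icc (0 : ℝ) (Real.exp ε),
      |((univ.filter fun s : Fin ℓ → Bool =>
            θ ≤ R x (R₀ (G s)) / ρ (R₀ (G s))).card : ℝ) / 2 ^ ℓ -
        ((univ.filter fun r : Fin t → Bool =>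
            θ ≤ R x (R₀ r) / ρ (R₀ r)).card : ℝ) / 2 ^ t| ≤ β) :
    ∀ x : X,
      (1 - δ - Real.exp ε * β ≤
        (∑ s : Fin ℓ → Bool,
          min (R x (R₀ (G s))) (Real.exp ε * ρ (R₀ (G s))) / ρ (R₀ (G s))) / 2 ^ ℓ ∧
      (∑ s : Fin ℓ → Bool,
          min (R x (R₀ (G s))) (Real.exp ε * ρ (R₀ (G s))) / ρ (R₀ (G s))) / 2 ^ ℓ ≤
        1 + Real.exp ε * β) ∧
      (∑ s : Fin ℓ → Bool,
          max (1 - Real.exp ε *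
            (min (R x (R₀ (G s))) (Real.exp ε * ρ (R₀ (G s))) / ρ (R₀ (G s)))) 0) / 2 ^ ℓ ≤
        δ + β := by
  intro x
  have hexp : (0:ℝ) < Real.exp ε := Real.exp_pos ε
  have h1exp : (1:ℝ) ≤ Real.exp ε := Real.one_le_exp hε
  have h2t : (0:ℝ) < 2 ^ t := by positivity
  have h2l : (0:ℝ) < 2 ^ ℓ := by positivity
  have hρpos : ∀ r : Fin t → Bool, 0 < ρ (R₀ r) := by
    intro r
    rw [← hsamp (R₀ r)]
    apply div_pos _ h2t
    have hmem : r ∈ univ.filter fun r' : Fin t → Bool => R₀ r' = R₀ r := by simp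
    exact_mod_cast Finset.card_pos.mpr ⟨r, hmem⟩
  set f : (Fin t → Bool) → ℝ :=
    fun r => min (R x (R₀ r)) (Real.exp ε * ρ (R₀ r)) / ρ (R₀ r) with hf
  have hfmin : ∀ r, f r = min (R x (R₀ r) / ρ (R₀ r)) (Real.exp ε) := by
    intro r
    simp only [hf]
    rw [← min_div_div_right (hρpos r).le, mul_div_assoc, div_self (hρpos r).ne', mul_one]
  have hf0 : ∀ r, 0 ≤ f r := fun r =>
    div_nonneg (le_min ((hRpmf x).1 _) (mul_nonneg hexp.le (hρpmf.1 _))) (hρpos r).le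
  have hfM : ∀ r, f r ≤ Real.exp ε := fun r => by rw [hfmin r]; exact min_le_right _ _
  -- translated fooling hypothesis
  have hfool' : ∀ θ ∈ Set.Icc (0:ℝ) (Real.exp ε),
      |((univ.filter fun s : Fin ℓ → Bool => θ ≤ f (G s)).card : ℝ) / 2 ^ ℓ -
       ((univ.filter fun r : Fin t → Bool => θ ≤ f r).card : ℝ) / 2 ^ t| ≤ β := by
    intro θ hθ
    have e1 : (univ.filter fun s : Fin ℓ → Bool => θ ≤ f (G s)) =
        (univ.filter fun s : Fin ℓ → Bool => θ ≤ R x (R₀ (G s)) / ρ (R₀ (G s))) :=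
      Finset.filter_congr fun s _ => by
        rw [hfmin (G s), le_min_iff]; exact and_iff_left hθ.2
    have e2 : (univ.filter fun r : Fin t → Bool => θ ≤ f r) =
        (univ.filter fun r : Fin t → Bool => θ ≤ R x (R₀ r) / ρ (R₀ r)) :=
      Finset.filter_congr fun r _ => by
        rw [hfmin r, le_min_iff]; exact and_iff_left hθ.2
    rw [e1, e2]
    exact hfool x θ hθ
  -- the reference expectation
  have hEf : (∑ r : Fin t → Bool, f r) / 2 ^ t = ∑ y, min (R x y) (Real.exp ε * ρ y) := by
    calc (∑ r : Fin t → Bool, f r) / 2 ^ t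
        = ∑ y, (((univ.filter fun r : Fin t → Bool => R₀ r = y).card : ℝ) / 2 ^ t) *
            (min (R x y) (Real.exp ε * ρ y) / ρ y) :=
          avg_fiber R₀ (fun y => min (R x y) (Real.exp ε * ρ y) / ρ y)
      _ = ∑ y, min (R x y) (Real.exp ε * ρ y) := by
          refine Finset.sum_congr rfl fun y _ => ?_
          rw [hsamp y]
          rcases (hρpmf.1 y).eq_or_lt with h0 | h0
          · simp [← h0, min_eq_right ((hRpmf x).1 y)]
          · rw [mul_comm, div_mul_cancel₀ _ h0.ne']
  have hmin_le : ∑ y, min (R x y) (Real.exp ε * ρ y) ≤ 1 := by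
    rw [← (hRpmf x).2]
    exact Finset.sum_le_sum fun y _ => min_le_left _ _
  have hmin_ge : 1 - δ ≤ ∑ y, min (R x y) (Real.exp ε * ρ y) := by
    have key : ∀ y, min (R x y) (Real.exp ε * ρ y)
        = R x y - max (R x y - Real.exp ε * ρ y) 0 := by
      intro y
      rcases le_total (R x y) (Real.exp ε * ρ y) with h | h
      · rw [min_eq_left h, max_eq_right (by linarith)]; ring
      · rw [min_eq_right h, max_eq_left (by linarith)]; ring
    rw [Finset.sum_congr rfl fun y _ => key y, Finset.sum_sub_distrib, (hRpmf x).2]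
    linarith [(hDP x).1]
  -- part (i)
  have hcmp : |(∑ s : Fin ℓ → Bool, f (G s)) / 2 ^ ℓ - (∑ r : Fin t → Bool, f r) / 2 ^ t|
      ≤ Real.exp ε * β :=
    expect_compare (fun s => f (G s)) f (Real.exp ε) β (2 ^ ℓ) (2 ^ t) h2l.le h2t.le hexp.le
      (fun s => hf0 _) (fun s => hfM _) hf0 hfM
      (fun θ hθ => hfool' θ ⟨hθ.1.le, hθ.2⟩)
  obtain ⟨hc1, hc2⟩ := abs_sub_le_iff.mp hcmp
  rw [hEf] at hc1 hc2
  -- part (ii)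
  have hcmp2 : |(∑ s : Fin ℓ → Bool, max (1 - Real.exp ε * f (G s)) 0) / 2 ^ ℓ -
      (∑ r : Fin t → Bool, max (1 - Real.exp ε * f r) 0) / 2 ^ t| ≤ 1 * β := by
    apply expect_compare (fun s => max (1 - Real.exp ε * f (G s)) 0)
      (fun r => max (1 - Real.exp ε * f r) 0) 1 β (2 ^ ℓ) (2 ^ t) h2l.le h2t.le zero_le_one
      (fun s => le_max_right _ _)
      (fun s => max_le (by nlinarith [hf0 (G s)]) zero_le_one)
      (fun r => le_max_right _ _)
      (fun r => max_le (by nlinarith [hf0 r]) zero_le_one)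
    intro u hu
    set c : ℝ := (1 - u) / Real.exp ε with hc
    have hc0 : 0 ≤ c := div_nonneg (by linarith [hu.2]) hexp.le
    have hiff : ∀ w : ℝ, (u ≤ max (1 - Real.exp ε * w) 0 ↔ ¬ c < w) := by
      intro w
      have hkey : w ≤ c ↔ Real.exp ε * w ≤ 1 - u := by
        rw [hc, le_div_iff₀ hexp, mul_comm]
      rw [le_max_iff, not_lt]
      constructor
      · rintro (h | h)
        · exact hkey.mpr (by linarith)
        · exact absurd h (not_le.mpr hu.1)
      · intro h
        left
        linarith [hkey.mp h]
    have eA : ((univ.filter fun s : Fin ℓ → Bool =>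
        u ≤ max (1 - Real.exp ε * f (G s)) 0).card : ℝ)
        = 2 ^ ℓ - ((univ.filter fun s : Fin ℓ → Bool => c < f (G s)).card : ℝ) := by
      rw [Finset.filter_congr (fun s _ => hiff (f (G s))), Finset.filter_not,
        Finset.cast_card_sdiff (Finset.filter_subset _ _)]
      congr 1
      simp [Finset.card_univ]
    have eB : ((univ.filter fun r : Fin t → Bool =>
        u ≤ max (1 - Real.exp ε * f r) 0).card : ℝ)
        = 2 ^ t - ((univ.filter fun r : Fin t → Bool => c < f r).card : ℝ) := by
      rw [Finset.filter_congr (fun r _ => hiff (f r)), Finset.filter_not,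
        Finset.cast_card_sdiff (Finset.filter_subset _ _)]
      congr 1
      simp [Finset.card_univ]
    rw [eA, eB]
    have halg : (2 ^ ℓ - ((univ.filter fun s : Fin ℓ → Bool => c < f (G s)).card : ℝ)) / 2 ^ ℓ -
        (2 ^ t - ((univ.filter fun r : Fin t → Bool => c < f r).card : ℝ)) / 2 ^ t
        = -( ((univ.filter fun s : Fin ℓ → Bool => c < f (G s)).card : ℝ) / 2 ^ ℓ -
          ((univ.filter fun r : Fin t → Bool => c < f r).card : ℝ) / 2 ^ t) := by
      field_simp
      ring
    rw [halg, abs_neg]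
    exact strict_compare (fun s => f (G s)) f (Real.exp ε) β (2 ^ ℓ) (2 ^ t) c hβ0
      (fun s => hfM _) hfM hc0 hfool'
  obtain ⟨hd1, _⟩ := abs_sub_le_iff.mp hcmp2
  have hEr : (∑ r : Fin t → Bool, max (1 - Real.exp ε * f r) 0) / 2 ^ t ≤ δ := by
    calc (∑ r : Fin t → Bool, max (1 - Real.exp ε * f r) 0) / 2 ^ t
        = ∑ y, (((univ.filter fun r : Fin t → Bool => R₀ r = y).card : ℝ) / 2 ^ t) *
            max (1 - Real.exp ε * (min (R x y) (Real.exp ε * ρ y) / ρ y)) 0 :=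
          avg_fiber R₀ (fun y => max (1 - Real.exp ε * (min (R x y) (Real.exp ε * ρ y) / ρ y)) 0)
      _ ≤ ∑ y, max (ρ y - Real.exp ε * R x y) 0 := by
          refine Finset.sum_le_sum fun y _ => ?_
          rw [hsamp y]
          rcases (hρpmf.1 y).eq_or_lt with h0 | h0
          · rw [← h0, zero_mul]
            exact le_max_right _ _
          · have hmul : ρ y * max (1 - Real.exp ε * (min (R x y) (Real.exp ε * ρ y) / ρ y)) 0
                = max (ρ y - Real.exp ε * min (R x y) (Real.exp ε * ρ y)) 0 := by
              rw [mul_max_of_nonneg _ _ h0.le, mul_zero]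
              congr 1
              field_simp
            rw [hmul]
            rcases le_total (R x y) (Real.exp ε * ρ y) with h | h
            · rw [min_eq_left h]
            · rw [min_eq_right h]
              have hneg : ρ y - Real.exp ε * (Real.exp ε * ρ y) ≤ 0 := by
                nlinarith [mul_le_mul h1exp h1exp zero_le_one hexp.le, h0.le]
              exact max_le (le_trans hneg (le_max_right _ _)) (le_max_right _ _)
      _ ≤ δ := (hDP x).2
  exact ⟨⟨by linarith, by linarith⟩, by linarith⟩
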